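/- Let Ω ⊂ ℝⁿ be bounded, h_m, h ∈ L∞(Ω) with 0 ≤ h_m ≤ a₅, h_m → h a.e., and u_m ⇀ u weakly in X. Then lim inf ∫_Ω h_m·I(u_m)^{1/2} dx ≥ ∫_Ω h·I(u)^{1/2} dx. -/

import Mathlib

open MeasureTheory Filter ENNReal

set_option maxHeartbeats 1600000 in
/-- Lemma 3.7: weak lower semicontinuity of the Bingham functional.
The space `X` (H¹-fields with norm `(∫ I(u))^{1/2}`) is represented through the rate of
strain tensors, viewed isometrically as elements of `L²(Ω; ℝ^{n×n})`; weak convergence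
`u_m ⇀ u` means convergence under every continuous linear functional, and
`I(u)^{1/2}(x) = ‖u(x)‖` is the pointwise Frobenius (Euclidean) norm. -/
theorem bingham_functional_weak_lsc {n : ℕ} {Ω : Type*} [MeasurableSpace Ω]
    (μ : Measure Ω) [IsFiniteMeasure μ]
    (a₅ : ℝ) (h : ℕ → Ω → ℝ) (h₀ : Ω → ℝ)
    (hmeas : ∀ m, Measurable (h m)) (hmeas₀ : Measurable h₀)
    (hb : ∀ m, ∀ᵐ x ∂μ, 0 ≤ h m x ∧ h m x ≤ a₅)
    (hae : ∀ᵐ x ∂μ, Tendsto (fun m => h m x) atTop (nhds (h₀ x)))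
    (u : ℕ → Lp (EuclideanSpace ℝ (Fin n × Fin n)) 2 μ)
    (u₀ : Lp (EuclideanSpace ℝ (Fin n × Fin n)) 2 μ)
    (hweak : ∀ f : Lp (EuclideanSpace ℝ (Fin n × Fin n)) 2 μ →L[ℝ] ℝ,
      Tendsto (fun m => f (u m)) atTop (nhds (f u₀))) :
    (∫ x, h₀ x * ‖(u₀ : Ω →ₘ[μ] EuclideanSpace ℝ (Fin n × Fin n)) x‖ ∂μ)
      ≤ liminf (fun m =>
          ∫ x, h m x * ‖(u m : Ω →ₘ[μ] EuclideanSpace ℝ (Fin n × Fin n)) x‖ ∂μ) atTop := by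
  classical
  set E := EuclideanSpace ℝ (Fin n × Fin n) with hEdef
  set v : ℕ → Ω → E := fun m x => (u m : Ω →ₘ[μ] E) x with hvdef
  set v₀ : Ω → E := fun x => (u₀ : Ω →ₘ[μ] E) x with hv₀def
  -- bounds on the limit weight
  have hb₀ : ∀ᵐ x ∂μ, 0 ≤ h₀ x ∧ h₀ x ≤ a₅ := by
    have hball : ∀ᵐ x ∂μ, ∀ m, 0 ≤ h m x ∧ h m x ≤ a₅ := ae_all_iff.2 hb
    filter_upwards [hball, hae] with x hx hxt
    exact ⟨ge_of_tendsto hxt (Eventually.of_forall fun m => (hx m).1),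
      le_of_tendsto hxt (Eventually.of_forall fun m => (hx m).2)⟩
  -- the dual test function g
  set g : Ω → E := fun x => (h₀ x * ‖v₀ x‖⁻¹) • v₀ x with hgdef
  have hgm : AEStronglyMeasurable g μ := by
    refine AEStronglyMeasurable.smul (f := fun x => h₀ x * ‖v₀ x‖⁻¹) (g := v₀) ?_ ?_
    · exact (hmeas₀.aemeasurable.mul
        ((Lp.aestronglyMeasurable u₀).norm.aemeasurable.inv)).aestronglyMeasurable
    · exact Lp.aestronglyMeasurable u₀
  have hg_le : ∀ᵐ x ∂μ, ‖g x‖ ≤ h₀ x := by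
    filter_upwards [hb₀] with x hx
    have : ‖g x‖ = |h₀ x * ‖v₀ x‖⁻¹| * ‖v₀ x‖ := by
      simp only [hgdef, norm_smul, Real.norm_eq_abs]
    rw [this, abs_mul, abs_of_nonneg hx.1, abs_of_nonneg (inv_nonneg.2 (norm_nonneg _)),
      mul_assoc]
    rcases eq_or_ne (‖v₀ x‖) 0 with hz | hz
    · simp [hz, hx.1]
    · rw [inv_mul_cancel₀ hz, mul_one]
  have hg2 : MemLp g 2 μ := by
    refine MemLp.of_bound hgm a₅ ?_
    filter_upwards [hg_le, hb₀] with x hx hx'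
    exact hx.trans hx'.2
  set gL : Lp E 2 μ := hg2.toLp g with hgLdef
  have hgL : (gL : Ω →ₘ[μ] E) =ᵐ[μ] g := MemLp.coeFn_toLp hg2
  -- pointwise identity on u₀
  have key₀ : ∀ x, (inner ℝ (g x) (v₀ x) : ℝ) = h₀ x * ‖v₀ x‖ := by
    intro x
    rw [hgdef]
    rcases eq_or_ne (‖v₀ x‖) 0 with hz | hz
    · have : v₀ x = 0 := norm_eq_zero.1 hz
      simp [this]
    · rw [real_inner_smul_left, real_inner_self_eq_norm_mul_norm]
      field_simp
  -- pointwise bound against any test field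
  have key_le : ∀ (w : Ω → E), ∀ᵐ x ∂μ, (inner ℝ (g x) (w x) : ℝ) ≤ h₀ x * ‖w x‖ := by
    intro w
    filter_upwards [hg_le] with x hx
    calc (inner ℝ (g x) (w x) : ℝ) ≤ ‖g x‖ * ‖w x‖ := real_inner_le_norm _ _
      _ ≤ h₀ x * ‖w x‖ := mul_le_mul_of_nonneg_right hx (norm_nonneg _)
  -- integrability facts
  have int_norm : ∀ f : Lp E 2 μ, Integrable (fun x => ‖(f : Ω →ₘ[μ] E) x‖) μ := fun f =>
    memLp_one_iff_integrable.1 ((Lp.memLp f).norm.mono_exponent one_le_two)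
  have int_hm : ∀ m, Integrable (fun x => h m x * ‖v m x‖) μ := fun m =>
    (int_norm (u m)).bdd_mul ((hmeas m).aestronglyMeasurable) (by
      filter_upwards [hb m] with x hx
      rw [Real.norm_eq_abs, abs_of_nonneg hx.1]; exact hx.2)
  have int_h0m : ∀ m, Integrable (fun x => h₀ x * ‖v m x‖) μ := fun m =>
    (int_norm (u m)).bdd_mul hmeas₀.aestronglyMeasurable (by
      filter_upwards [hb₀] with x hx
      rw [Real.norm_eq_abs, abs_of_nonneg hx.1]; exact hx.2)
  have habs_bdd : ∀ m, ∀ᵐ x ∂μ, |h₀ x - h m x| ≤ a₅ := by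
    intro m
    filter_upwards [hb₀, hb m] with x hx hx'
    exact abs_le.2 ⟨by linarith [hx.1, hx'.2], by linarith [hx.2, hx'.1]⟩
  have int_abs : ∀ m, Integrable (fun x => |h₀ x - h m x| * ‖v m x‖) μ := fun m =>
    (int_norm (u m)).bdd_mul ((hmeas₀.sub (hmeas m)).abs.aestronglyMeasurable) (by
      filter_upwards [habs_bdd m] with x hx
      rwa [Real.norm_eq_abs, abs_abs])
  -- the continuous linear functional given by inner product with gL
  have hwf := hweak (innerSL ℝ gL)
  have hlim₀ : (innerSL ℝ gL) u₀ = ∫ x, h₀ x * ‖v₀ x‖ ∂μ := by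
    rw [innerSL_apply_apply, L2.inner_def]
    refine integral_congr_ae ?_
    filter_upwards [hgL] with x hx
    rw [hx]
    exact key₀ x
  have hlimm : ∀ m, (innerSL ℝ gL) (u m) = ∫ x, (inner ℝ (g x) (v m x) : ℝ) ∂μ := by
    intro m
    rw [innerSL_apply_apply, L2.inner_def]
    refine integral_congr_ae ?_
    filter_upwards [hgL] with x hx
    rw [hx]
  have int_inner : ∀ m, Integrable (fun x => (inner ℝ (g x) (v m x) : ℝ)) μ := by
    intro m
    refine (L2.integrable_inner gL (u m)).congr ?_
    filter_upwards [hgL] with x hx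
    rw [hx]
  -- step 1 : ∫ ⟪g, v m⟫ ≤ ∫ h₀ ‖v m‖
  have step1 : ∀ m, (∫ x, (inner ℝ (g x) (v m x) : ℝ) ∂μ) ≤ ∫ x, h₀ x * ‖v m x‖ ∂μ := fun m =>
    integral_mono_ae (int_inner m) (int_h0m m) (key_le (v m))
  -- step 2 : ∫ h₀ ‖v m‖ ≤ ∫ h m ‖v m‖ + ∫ |h₀ - h m| ‖v m‖
  have step2 : ∀ m, (∫ x, h₀ x * ‖v m x‖ ∂μ)
      ≤ (∫ x, h m x * ‖v m x‖ ∂μ) + ∫ x, |h₀ x - h m x| * ‖v m x‖ ∂μ := by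
    intro m
    rw [← integral_add (int_hm m) (int_abs m)]
    refine integral_mono_ae (int_h0m m) ((int_hm m).add (int_abs m)) ?_
    filter_upwards with x
    nlinarith [mul_le_mul_of_nonneg_right (le_abs_self (h₀ x - h m x)) (norm_nonneg (v m x))]
  -- uniform boundedness of the weakly convergent sequence
  obtain ⟨C, hC⟩ : ∃ C, ∀ m, ‖u m‖ ≤ C := by
    obtain ⟨C, hC⟩ := banach_steinhaus (g := fun m => innerSL ℝ (u m)) (fun x => by
      have hx := (hweak (innerSL ℝ x)).norm.bddAbove_range
      obtain ⟨C, hCx⟩ := hx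
      refine ⟨C, fun m => ?_⟩
      have : ‖(innerSL ℝ (u m)) x‖ = ‖(innerSL ℝ x) (u m)‖ := by
        simp [innerSL_apply_apply, real_inner_comm]
      rw [this]
      exact hCx (Set.mem_range_self m))
    exact ⟨C, fun m => by simpa [innerSL_apply_norm] using hC m⟩
  have hC0 : 0 ≤ C := (norm_nonneg (u 0)).trans (hC 0)
  -- Cauchy–Schwarz : the error term tends to 0
  set ε : ℕ → ℝ := fun m => ∫ x, |h₀ x - h m x| * ‖v m x‖ ∂μ with hεdef
  have hε0 : ∀ m, 0 ≤ ε m := fun m =>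
    integral_nonneg fun x => mul_nonneg (abs_nonneg _) (norm_nonneg _)
  have habs2 : ∀ m, MemLp (fun x => |h₀ x - h m x|) 2 μ := fun m =>
    MemLp.of_bound ((hmeas₀.sub (hmeas m)).abs.aestronglyMeasurable) a₅ (by
      filter_upwards [habs_bdd m] with x hx
      rwa [Real.norm_eq_abs, abs_abs])
  have hεle : ∀ m, ε m ≤ Real.sqrt (∫ x, (h₀ x - h m x) ^ 2 ∂μ) * C := by
    intro m
    set D : Lp ℝ 2 μ := (habs2 m).toLp _ with hD
    set N : Lp ℝ 2 μ := ((Lp.memLp (u m)).norm).toLp _ with hN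
    have hDc : (D : Ω →ₘ[μ] ℝ) =ᵐ[μ] fun x => |h₀ x - h m x| := MemLp.coeFn_toLp _
    have hNc : (N : Ω →ₘ[μ] ℝ) =ᵐ[μ] fun x => ‖v m x‖ := MemLp.coeFn_toLp _
    have hεeq : ε m = (inner ℝ D N : ℝ) := by
      rw [hεdef, L2.inner_def]
      refine (integral_congr_ae ?_).symm
      filter_upwards [hDc, hNc] with x hx hx'
      rw [RCLike.inner_apply', hx, hx']
      simp
    have hNn : ‖N‖ = ‖u m‖ := by
      rw [hN, Lp.norm_toLp, eLpNorm_norm, Lp.norm_def]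
    have hDsq : ‖D‖ ^ 2 = ∫ x, (h₀ x - h m x) ^ 2 ∂μ := by
      rw [← real_inner_self_eq_norm_sq, L2.inner_def]
      refine integral_congr_ae ?_
      filter_upwards [hDc] with x hx
      rw [RCLike.inner_apply, hx]
      simp [sq_abs, sq]
    have hDn : ‖D‖ = Real.sqrt (∫ x, (h₀ x - h m x) ^ 2 ∂μ) := by
      rw [← hDsq, Real.sqrt_sq (norm_nonneg _)]
    calc ε m = (inner ℝ D N : ℝ) := hεeq
      _ ≤ ‖D‖ * ‖N‖ := real_inner_le_norm _ _
      _ ≤ Real.sqrt (∫ x, (h₀ x - h m x) ^ 2 ∂μ) * C := by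
          rw [hDn, hNn]
          exact mul_le_mul_of_nonneg_left (hC m) (Real.sqrt_nonneg _)
  have hsq_tendsto : Tendsto (fun m => ∫ x, (h₀ x - h m x) ^ 2 ∂μ) atTop (nhds 0) := by
    have h0 : (0 : ℝ) = ∫ _ : Ω, (0 : ℝ) ∂μ := by simp
    rw [h0]
    refine tendsto_integral_of_dominated_convergence (fun _ => a₅ ^ 2)
      (fun m => ((hmeas₀.sub (hmeas m)).pow_const 2).aestronglyMeasurable)
      (integrable_const _) (fun m => ?_) ?_
    · filter_upwards [habs_bdd m, hb₀, hb m] with x hx hx' hx''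
      rw [Real.norm_eq_abs, abs_of_nonneg (sq_nonneg _), ← sq_abs]
      have ha₅ : 0 ≤ a₅ := le_trans hx'.1 hx'.2
      nlinarith [abs_nonneg (h₀ x - h m x)]
    · filter_upwards [hae] with x hxt
      have : Tendsto (fun m => (h₀ x - h m x) ^ 2) atTop (nhds ((h₀ x - h₀ x) ^ 2)) :=
        (tendsto_const_nhds.sub hxt).pow 2
      simpa using this
  have hεlim : Tendsto ε atTop (nhds 0) := by
    have hg' : Tendsto (fun m => Real.sqrt (∫ x, (h₀ x - h m x) ^ 2 ∂μ) * C) atTop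
        (nhds (Real.sqrt 0 * C)) :=
      ((Real.continuous_sqrt.continuousAt.tendsto.comp hsq_tendsto).mul_const C)
    rw [Real.sqrt_zero, zero_mul] at hg'
    exact squeeze_zero hε0 hεle hg'
  -- combine
  set c : ℕ → ℝ := fun m => ∫ x, (inner ℝ (g x) (v m x) : ℝ) ∂μ with hcdef
  have hc_tendsto : Tendsto c atTop (nhds (∫ x, h₀ x * ‖v₀ x‖ ∂μ)) := by
    have : (fun m => (innerSL ℝ gL) (u m)) = c := funext fun m => hlimm m
    rw [← this, ← hlim₀]
    exact hwf
  have hkey : Tendsto (fun m => c m - ε m) atTop (nhds (∫ x, h₀ x * ‖v₀ x‖ ∂μ)) := by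
    simpa using hc_tendsto.sub hεlim
  set A : ℕ → ℝ := fun m => ∫ x, h m x * ‖v m x‖ ∂μ with hAdef
  have hle : ∀ m, c m - ε m ≤ A m := fun m => by
    have h1 := step1 m
    have h2 := step2 m
    simp only [hcdef, hεdef, hAdef]
    linarith
  have hA0 : ∀ m, 0 ≤ A m := fun m =>
    integral_nonneg_of_ae (by
      filter_upwards [hb m] with x hx
      exact mul_nonneg hx.1 (norm_nonneg _))
  -- the sequence A is bounded above
  have hh2 : ∀ m, MemLp (h m) 2 μ := fun m =>
    MemLp.of_bound (hmeas m).aestronglyMeasurable a₅ (by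
      filter_upwards [hb m] with x hx
      rw [Real.norm_eq_abs, abs_of_nonneg hx.1]; exact hx.2)
  have hAbd : ∀ m, A m ≤ (μ Set.univ ^ (2 : ℝ≥0∞).toReal⁻¹ * ENNReal.ofReal a₅).toReal * C := by
    intro m
    set Hm : Lp ℝ 2 μ := (hh2 m).toLp _ with hHm
    set N : Lp ℝ 2 μ := ((Lp.memLp (u m)).norm).toLp _ with hN
    have hHc : (Hm : Ω →ₘ[μ] ℝ) =ᵐ[μ] h m := MemLp.coeFn_toLp _
    have hNc : (N : Ω →ₘ[μ] ℝ) =ᵐ[μ] fun x => ‖v m x‖ := MemLp.coeFn_toLp _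
    have hAeq : A m = (inner ℝ Hm N : ℝ) := by
      rw [hAdef, L2.inner_def]
      refine (integral_congr_ae ?_).symm
      filter_upwards [hHc, hNc] with x hx hx'
      rw [RCLike.inner_apply', hx, hx']
      simp
    have hNn : ‖N‖ ≤ C := by
      rw [hN, Lp.norm_toLp, eLpNorm_norm, ← Lp.norm_def]
      exact hC m
    have hHn : ‖Hm‖ ≤ (μ Set.univ ^ (2 : ℝ≥0∞).toReal⁻¹ * ENNReal.ofReal a₅).toReal := by
      rw [hHm, Lp.norm_toLp]
      refine ENNReal.toReal_mono ?_ (eLpNorm_le_of_ae_bound (by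
        filter_upwards [hb m] with x hx
        rw [Real.norm_eq_abs, abs_of_nonneg hx.1]; exact hx.2))
      exact ENNReal.mul_ne_top
        (ENNReal.rpow_ne_top_of_nonneg (inv_nonneg.2 ENNReal.toReal_nonneg) (measure_ne_top μ _))
        ENNReal.ofReal_ne_top
    calc A m = (inner ℝ Hm N : ℝ) := hAeq
      _ ≤ ‖Hm‖ * ‖N‖ := real_inner_le_norm _ _
      _ ≤ _ := mul_le_mul hHn hNn (norm_nonneg _) ENNReal.toReal_nonneg
  have hliminf : liminf (fun m => c m - ε m) atTop ≤ liminf A atTop := by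
    refine liminf_le_liminf (Eventually.of_forall hle) ?_ ?_
    · exact hkey.isBoundedUnder_ge
    · exact IsCoboundedUnder.of_frequently_le ((Eventually.of_forall hAbd).frequently)
  rw [← hkey.liminf_eq]
  exact hliminf
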